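/- Let R₁ be a finite integral domain and R₂ a finite commutative ring whose set of zero-divisors is {0, a} for a single nonzero element a (so diam(Γ(R₂)) = 0). Then the complement of the zero-divisor graph of R₁ × R₂ is a divisor graph. -/

import Mathlib

/-- A finite simple graph is a *divisor graph* if there is an injection from its
vertices to the positive integers such that distinct vertices are adjacent iff
one label divides the other. -/
def IsDivisorGraph {V : Type*} (G : SimpleGraph V) : Prop :=
  ∃ f : V → ℕ, Function.Injective f ∧ (∀ v, 0 < f v) ∧
    ∀ u v : V, u ≠ v → (G.Adj u v ↔ f u ∣ f v ∨ f v ∣ f u)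

/-- The vertex set of the zero-divisor graph: nonzero zero-divisors of `R`. -/
abbrev ZDVertex (R : Type*) [CommRing R] : Type _ :=
  {a : R // a ≠ 0 ∧ ∃ b : R, b ≠ 0 ∧ a * b = 0}

/-- The zero-divisor graph `Γ(R)`. -/
def zeroDivisorGraph (R : Type*) [CommRing R] : SimpleGraph (ZDVertex R) where
  Adj x y := x ≠ y ∧ x.val * y.val = 0
  symm := ⟨fun x y ⟨h1, h2⟩ => ⟨h1.symm, by rwa [mul_comm]⟩⟩
  loopless := ⟨fun x ⟨h, _⟩ => h rfl⟩

/-- The complement of the zero-divisor graph `Γ(R)̄`. -/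
def compZDGraph (R : Type*) [CommRing R] : SimpleGraph (ZDVertex R) where
  Adj x y := x ≠ y ∧ x.val * y.val ≠ 0
  symm := ⟨fun x y ⟨h1, h2⟩ => ⟨h1.symm, by rwa [mul_comm]⟩⟩
  loopless := ⟨fun x ⟨h, _⟩ => h rfl⟩

private lemma compZDGraph_adj' {R : Type*} [CommRing R] (x y : ZDVertex R) :
    (compZDGraph R).Adj x y ↔ x ≠ y ∧ x.val * y.val ≠ 0 := Iff.rfl

private lemma npdp {p q : ℕ} (hp : p.Prime) (hq : q.Prime) (hne : p ≠ q) (i : ℕ) :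
    ¬ p ∣ q ^ i := fun h => hne ((Nat.prime_dvd_prime_iff_eq hp hq).mp (hp.dvd_of_dvd_pow h))

private lemma pnd {p q : ℕ} (hp : p.Prime) (hq : q.Prime) (hne : p ≠ q) {i : ℕ}
    (hi : i ≠ 0) (j : ℕ) : ¬ p ^ i ∣ q ^ j :=
  fun h => npdp hp hq hne j ((dvd_pow_self p hi).trans h)

private lemma not3dvd (K N j : ℕ) : ¬ (3:ℕ) ∣ 2 ^ K * 5 ^ N * 7 ^ j := by
  intro h
  rcases (Nat.Prime.dvd_mul (by norm_num)).mp h with h | h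
  · rcases (Nat.Prime.dvd_mul (by norm_num)).mp h with h | h
    · exact npdp (by norm_num) (by norm_num) (by norm_num) K h
    · exact npdp (by norm_num) (by norm_num) (by norm_num) N h
  · exact npdp (by norm_num) (by norm_num) (by norm_num) j h

private lemma not5dvd (K : ℕ) : ¬ (5:ℕ) ∣ 2 ^ K * 3 := by
  intro h
  rcases (Nat.Prime.dvd_mul (by norm_num)).mp h with h | h
  · exact npdp (by norm_num) (by norm_num) (by norm_num) K h
  · norm_num at h

theorem compZDGraph_prod_domain_diamZero (R₁ R₂ : Type*) [CommRing R₁] [IsDomain R₁]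
    [Fintype R₁] [CommRing R₂] [Fintype R₂] (a : R₂) (ha : a ≠ 0)
    (hZ : {x : R₂ | ∃ b : R₂, b ≠ 0 ∧ x * b = 0} = {0, a}) :
    IsDivisorGraph (compZDGraph (R₁ × R₂)) := by
  classical
  -- basic facts about R₂
  have hmem : ∀ y : R₂, (∃ b : R₂, b ≠ 0 ∧ y * b = 0) → y = 0 ∨ y = a := by
    intro y hy
    have : y ∈ {x : R₂ | ∃ b : R₂, b ≠ 0 ∧ x * b = 0} := hy
    rw [hZ] at this
    simpa using this
  have hreg : ∀ y z : R₂, y ≠ 0 → y ≠ a → y * z = 0 → z = 0 := by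
    intro y z hy hya h
    by_contra hz
    rcases hmem y ⟨z, hz, h⟩ with h' | h' <;> simp_all
  have hAA : ∀ y z : R₂, y ≠ 0 → y ≠ a → z ≠ 0 → y * z ≠ 0 :=
    fun y z hy hya hz h => hz (hreg y z hy hya h)
  have haa : a * a = 0 := by
    have h1 : a ∈ {x : R₂ | ∃ b : R₂, b ≠ 0 ∧ x * b = 0} := by
      rw [hZ]; exact Set.mem_insert_iff.mpr (Or.inr rfl)
    obtain ⟨b, hb, hab⟩ := h1
    rcases hmem b ⟨a, ha, by rwa [mul_comm]⟩ with h | h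
    · exact absurd h hb
    · rwa [h] at hab
  set e₁ := Fintype.equivFin R₁ with he₁
  set e₂ := Fintype.equivFin R₂ with he₂
  set N := Fintype.card R₁ with hN
  set K := Fintype.card R₂ with hK
  have hN0 : N ≠ 0 := Fintype.card_ne_zero
  have h1le : ∀ x : R₁, (e₁ x : ℕ) + 1 ≤ N := fun x => (e₁ x).isLt
  have h2le : ∀ y : R₂, (e₂ y : ℕ) + 1 ≤ K := fun y => (e₂ y).isLt
  -- classification of vertices
  have hclass : ∀ x : R₁, ∀ y : R₂, (∀ hv : ((x, y) : R₁ × R₂) ≠ 0 ∧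
      ∃ b : R₁ × R₂, b ≠ 0 ∧ (x, y) * b = 0,
      (x = 0 ∧ y ≠ 0 ∧ y ≠ a) ∨ (x = 0 ∧ y = a) ∨ (x ≠ 0 ∧ y = 0) ∨ (x ≠ 0 ∧ y = a)) := by
    rintro x y ⟨hne, ⟨b, c⟩, hbc, hmul⟩
    rw [Prod.mk_mul_mk, Prod.mk_eq_zero] at hmul
    by_cases hx : x = 0
    · subst hx
      have hy0 : y ≠ 0 := fun h => hne (by rw [h]; rfl)
      by_cases hy : y = a
      · exact Or.inr (Or.inl ⟨rfl, hy⟩)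
      · exact Or.inl ⟨rfl, hy0, hy⟩
    · have hb : b = 0 := by
        rcases mul_eq_zero.mp hmul.1 with h | h
        · exact absurd h hx
        · exact h
      subst hb
      have hc : c ≠ 0 := fun h => hbc (by rw [h]; rfl)
      rcases hmem y ⟨c, hc, hmul.2⟩ with h | h
      · exact Or.inr (Or.inr (Or.inl ⟨hx, h⟩))
      · exact Or.inr (Or.inr (Or.inr ⟨hx, h⟩))
  refine ⟨fun v => if v.val.1 = 0 then
      (if v.val.2 = a then 2 ^ K * 3 else 2 ^ ((e₂ v.val.2 : ℕ) + 1))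
      else (if v.val.2 = a then 2 ^ K * 5 ^ N * 7 ^ ((e₁ v.val.1 : ℕ) + 1)
        else 5 ^ ((e₁ v.val.1 : ℕ) + 1)), ?_, ?_, ?_⟩
  · -- injectivity
    rintro ⟨⟨x1, y1⟩, hu⟩ ⟨⟨x2, y2⟩, hv⟩ h
    simp only at h
    rcases hclass x1 y1 hu with ⟨hx1, hy10, hy1a⟩ | ⟨hx1, hy1⟩ | ⟨hx1, hy1⟩ | ⟨hx1, hy1⟩ <;>
      rcases hclass x2 y2 hv with ⟨hx2, hy20, hy2a⟩ | ⟨hx2, hy2⟩ | ⟨hx2, hy2⟩ | ⟨hx2, hy2⟩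
    -- A'A'
    · rw [if_pos hx1, if_pos hx2, if_neg hy1a, if_neg hy2a] at h
      have h' := Nat.pow_right_injective (by norm_num) h
      have hy : y1 = y2 := e₂.injective (Fin.val_injective (by omega))
      exact Subtype.ext (show ((x1, y1) : R₁ × R₂) = (x2, y2) by rw [hx1, hx2, hy])
    -- A'S
    · exfalso
      rw [if_pos hx1, if_pos hx2, if_neg hy1a, if_pos hy2] at h
      exact npdp (p := 3) (q := 2) (by norm_num) (by norm_num) (by norm_num) _
        (h ▸ dvd_mul_left 3 (2 ^ K))
    -- A'B
    · exfalso
      have hy2a : y2 ≠ a := hy2 ▸ Ne.symm ha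
      rw [if_pos hx1, if_neg hy1a, if_neg hx2, if_neg hy2a] at h
      have h2 : (2:ℕ) ∣ 5 ^ ((e₁ x2 : ℕ) + 1) := h ▸ dvd_pow_self 2 (Nat.succ_ne_zero _)
      exact npdp (p := 2) (q := 5) (by norm_num) (by norm_num) (by norm_num) _ h2
    -- A'C
    · exfalso
      rw [if_pos hx1, if_neg hy1a, if_neg hx2, if_pos hy2] at h
      have h7 : (7:ℕ) ∣ 2 ^ K * 5 ^ N * 7 ^ ((e₁ x2 : ℕ) + 1) :=
        (dvd_pow_self 7 (Nat.succ_ne_zero _)).trans (dvd_mul_left _ _)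
      exact npdp (p := 7) (q := 2) (by norm_num) (by norm_num) (by norm_num) _ (h ▸ h7)
    -- SA'
    · exfalso
      rw [if_pos hx1, if_pos hx2, if_pos hy1, if_neg hy2a] at h
      exact npdp (p := 3) (q := 2) (by norm_num) (by norm_num) (by norm_num) _
        (h.symm ▸ dvd_mul_left 3 (2 ^ K))
    -- SS
    · exact Subtype.ext (show ((x1, y1) : R₁ × R₂) = (x2, y2) by rw [hx1, hx2, hy1, hy2])
    -- SB
    · exfalso
      have hy2a : y2 ≠ a := hy2 ▸ Ne.symm ha
      rw [if_pos hx1, if_pos hy1, if_neg hx2, if_neg hy2a] at h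
      exact npdp (p := 3) (q := 5) (by norm_num) (by norm_num) (by norm_num) _
        (h ▸ dvd_mul_left 3 (2 ^ K))
    -- SC
    · exfalso
      rw [if_pos hx1, if_pos hy1, if_neg hx2, if_pos hy2] at h
      exact not3dvd K N _ (h ▸ dvd_mul_left 3 (2 ^ K))
    -- BA'
    · exfalso
      have hy1a : y1 ≠ a := hy1 ▸ Ne.symm ha
      rw [if_neg hx1, if_neg hy1a, if_pos hx2, if_neg hy2a] at h
      have h2 : (2:ℕ) ∣ 5 ^ ((e₁ x1 : ℕ) + 1) := h.symm ▸ dvd_pow_self 2 (Nat.succ_ne_zero _)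
      exact npdp (p := 2) (q := 5) (by norm_num) (by norm_num) (by norm_num) _ h2
    -- BS
    · exfalso
      have hy1a : y1 ≠ a := hy1 ▸ Ne.symm ha
      rw [if_neg hx1, if_neg hy1a, if_pos hx2, if_pos hy2] at h
      exact npdp (p := 3) (q := 5) (by norm_num) (by norm_num) (by norm_num) _
        (h.symm ▸ dvd_mul_left 3 (2 ^ K))
    -- BB
    · have hy1a : y1 ≠ a := hy1 ▸ Ne.symm ha
      have hy2a : y2 ≠ a := hy2 ▸ Ne.symm ha
      rw [if_neg hx1, if_neg hx2, if_neg hy1a, if_neg hy2a] at h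
      have h' := Nat.pow_right_injective (by norm_num) h
      have hx : x1 = x2 := e₁.injective (Fin.val_injective (by omega))
      exact Subtype.ext (show ((x1, y1) : R₁ × R₂) = (x2, y2) by rw [hy1, hy2, hx])
    -- BC
    · exfalso
      have hy1a : y1 ≠ a := hy1 ▸ Ne.symm ha
      rw [if_neg hx1, if_neg hy1a, if_neg hx2, if_pos hy2] at h
      have h7 : (7:ℕ) ∣ 2 ^ K * 5 ^ N * 7 ^ ((e₁ x2 : ℕ) + 1) :=
        (dvd_pow_self 7 (Nat.succ_ne_zero _)).trans (dvd_mul_left _ _)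
      exact npdp (p := 7) (q := 5) (by norm_num) (by norm_num) (by norm_num) _ (h ▸ h7)
    -- CA'
    · exfalso
      rw [if_neg hx1, if_pos hy1, if_pos hx2, if_neg hy2a] at h
      have h7 : (7:ℕ) ∣ 2 ^ K * 5 ^ N * 7 ^ ((e₁ x1 : ℕ) + 1) :=
        (dvd_pow_self 7 (Nat.succ_ne_zero _)).trans (dvd_mul_left _ _)
      exact npdp (p := 7) (q := 2) (by norm_num) (by norm_num) (by norm_num) _ (h.symm ▸ h7)
    -- CS
    · exfalso
      rw [if_neg hx1, if_pos hy1, if_pos hx2, if_pos hy2] at h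
      exact not3dvd K N _ (h.symm ▸ dvd_mul_left 3 (2 ^ K))
    -- CB
    · exfalso
      have hy2a : y2 ≠ a := hy2 ▸ Ne.symm ha
      rw [if_neg hx1, if_pos hy1, if_neg hx2, if_neg hy2a] at h
      have h7 : (7:ℕ) ∣ 2 ^ K * 5 ^ N * 7 ^ ((e₁ x1 : ℕ) + 1) :=
        (dvd_pow_self 7 (Nat.succ_ne_zero _)).trans (dvd_mul_left _ _)
      exact npdp (p := 7) (q := 5) (by norm_num) (by norm_num) (by norm_num) _ (h.symm ▸ h7)
    -- CC
    · rw [if_neg hx1, if_pos hy1, if_neg hx2, if_pos hy2] at h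
      have hne : (2:ℕ) ^ K * 5 ^ N ≠ 0 := by positivity
      have h' := Nat.pow_right_injective (by norm_num : 2 ≤ 7) (mul_left_cancel₀ hne h)
      have hx : x1 = x2 := e₁.injective (Fin.val_injective (by omega))
      exact Subtype.ext (show ((x1, y1) : R₁ × R₂) = (x2, y2) by rw [hy1, hy2, hx])
  · -- positivity
    rintro ⟨⟨x, y⟩, hv⟩
    simp only
    split <;> split <;> positivity
  · -- adjacency
    rintro ⟨⟨x1, y1⟩, hu⟩ ⟨⟨x2, y2⟩, hv⟩ huv
    rw [compZDGraph_adj']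
    simp only
    rcases hclass x1 y1 hu with ⟨hx1, hy10, hy1a⟩ | ⟨hx1, hy1⟩ | ⟨hx1, hy1⟩ | ⟨hx1, hy1⟩ <;>
      rcases hclass x2 y2 hv with ⟨hx2, hy20, hy2a⟩ | ⟨hx2, hy2⟩ | ⟨hx2, hy2⟩ | ⟨hx2, hy2⟩
    -- A'A' : adjacent
    · refine iff_of_true ⟨huv, ?_⟩ ?_
      · intro hc
        rw [Prod.mk_mul_mk, Prod.mk_eq_zero] at hc
        exact hAA y1 y2 hy10 hy1a hy20 hc.2
      · rw [if_pos hx1, if_pos hx2, if_neg hy1a, if_neg hy2a]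
        rcases le_total ((e₂ y1 : ℕ) + 1) ((e₂ y2 : ℕ) + 1) with h | h
        · exact Or.inl (pow_dvd_pow 2 h)
        · exact Or.inr (pow_dvd_pow 2 h)
    -- A'S : adjacent
    · refine iff_of_true ⟨huv, ?_⟩ ?_
      · intro hc
        rw [Prod.mk_mul_mk, Prod.mk_eq_zero] at hc
        rw [hy2] at hc
        exact hAA y1 a hy10 hy1a ha hc.2
      · rw [if_pos hx1, if_pos hx2, if_neg hy1a, if_pos hy2]
        exact Or.inl (dvd_mul_of_dvd_left (pow_dvd_pow 2 (h2le y1)) 3)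
    -- A'B : not adjacent
    · have hy2a : y2 ≠ a := hy2 ▸ Ne.symm ha
      refine iff_of_false ?_ ?_
      · rintro ⟨-, h0⟩
        exact h0 (by rw [Prod.mk_mul_mk, hx1, hy2, zero_mul, mul_zero]; rfl)
      · rw [if_pos hx1, if_neg hy1a, if_neg hx2, if_neg hy2a]
        rintro (h | h)
        · exact pnd (p := 2) (q := 5) (by norm_num) (by norm_num) (by norm_num)
            (Nat.succ_ne_zero _) _ h
        · exact pnd (p := 5) (q := 2) (by norm_num) (by norm_num) (by norm_num)
            (Nat.succ_ne_zero _) _ h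
    -- A'C : adjacent
    · refine iff_of_true ⟨huv, ?_⟩ ?_
      · intro hc
        rw [Prod.mk_mul_mk, Prod.mk_eq_zero] at hc
        rw [hy2] at hc
        exact hAA y1 a hy10 hy1a ha hc.2
      · rw [if_pos hx1, if_neg hy1a, if_neg hx2, if_pos hy2]
        exact Or.inl (dvd_mul_of_dvd_left
          (dvd_mul_of_dvd_left (pow_dvd_pow 2 (h2le y1)) (5 ^ N)) _)
    -- SA' : adjacent
    · refine iff_of_true ⟨huv, ?_⟩ ?_
      · intro hc
        rw [Prod.mk_mul_mk, Prod.mk_eq_zero] at hc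
        rw [hy1] at hc
        exact hAA y2 a hy20 hy2a ha (mul_comm a y2 ▸ hc.2)
      · rw [if_pos hx1, if_pos hx2, if_pos hy1, if_neg hy2a]
        exact Or.inr (dvd_mul_of_dvd_left (pow_dvd_pow 2 (h2le y2)) 3)
    -- SS : impossible
    · exact absurd (Subtype.ext
        (show ((x1, y1) : R₁ × R₂) = (x2, y2) by rw [hx1, hx2, hy1, hy2])) huv
    -- SB : not adjacent
    · have hy2a : y2 ≠ a := hy2 ▸ Ne.symm ha
      refine iff_of_false ?_ ?_
      · rintro ⟨-, h0⟩
        exact h0 (by rw [Prod.mk_mul_mk, hx1, hy2, zero_mul, mul_zero]; rfl)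
      · rw [if_pos hx1, if_pos hy1, if_neg hx2, if_neg hy2a]
        rintro (h | h)
        · exact npdp (p := 3) (q := 5) (by norm_num) (by norm_num) (by norm_num) _
            ((dvd_mul_left 3 (2 ^ K)).trans h)
        · exact not5dvd K ((dvd_pow_self 5 (Nat.succ_ne_zero _)).trans h)
    -- SC : not adjacent
    · refine iff_of_false ?_ ?_
      · rintro ⟨-, h0⟩
        exact h0 (by rw [Prod.mk_mul_mk, hx1, hy1, hy2, zero_mul, haa]; rfl)
      · rw [if_pos hx1, if_pos hy1, if_neg hx2, if_pos hy2]
        rintro (h | h)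
        · exact not3dvd K N _ ((dvd_mul_left 3 (2 ^ K)).trans h)
        · exact not5dvd K ((dvd_mul_of_dvd_left
            (dvd_mul_of_dvd_right (dvd_pow_self 5 hN0) (2 ^ K)) _).trans h)
    -- BA' : not adjacent
    · have hy1a : y1 ≠ a := hy1 ▸ Ne.symm ha
      refine iff_of_false ?_ ?_
      · rintro ⟨-, h0⟩
        exact h0 (by rw [Prod.mk_mul_mk, hx2, hy1, mul_zero, zero_mul]; rfl)
      · rw [if_neg hx1, if_neg hy1a, if_pos hx2, if_neg hy2a]
        rintro (h | h)
        · exact pnd (p := 5) (q := 2) (by norm_num) (by norm_num) (by norm_num)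
            (Nat.succ_ne_zero _) _ h
        · exact pnd (p := 2) (q := 5) (by norm_num) (by norm_num) (by norm_num)
            (Nat.succ_ne_zero _) _ h
    -- BS : not adjacent
    · have hy1a : y1 ≠ a := hy1 ▸ Ne.symm ha
      refine iff_of_false ?_ ?_
      · rintro ⟨-, h0⟩
        exact h0 (by rw [Prod.mk_mul_mk, hx2, hy1, mul_zero, zero_mul]; rfl)
      · rw [if_neg hx1, if_neg hy1a, if_pos hx2, if_pos hy2]
        rintro (h | h)
        · exact not5dvd K ((dvd_pow_self 5 (Nat.succ_ne_zero _)).trans h)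
        · exact npdp (p := 3) (q := 5) (by norm_num) (by norm_num) (by norm_num) _
            ((dvd_mul_left 3 (2 ^ K)).trans h)
    -- BB : adjacent
    · have hy1a : y1 ≠ a := hy1 ▸ Ne.symm ha
      have hy2a : y2 ≠ a := hy2 ▸ Ne.symm ha
      refine iff_of_true ⟨huv, ?_⟩ ?_
      · intro hc
        rw [Prod.mk_mul_mk, Prod.mk_eq_zero] at hc
        exact mul_ne_zero hx1 hx2 hc.1
      · rw [if_neg hx1, if_neg hx2, if_neg hy1a, if_neg hy2a]
        rcases le_total ((e₁ x1 : ℕ) + 1) ((e₁ x2 : ℕ) + 1) with h | h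
        · exact Or.inl (pow_dvd_pow 5 h)
        · exact Or.inr (pow_dvd_pow 5 h)
    -- BC : adjacent
    · have hy1a : y1 ≠ a := hy1 ▸ Ne.symm ha
      refine iff_of_true ⟨huv, ?_⟩ ?_
      · intro hc
        rw [Prod.mk_mul_mk, Prod.mk_eq_zero] at hc
        exact mul_ne_zero hx1 hx2 hc.1
      · rw [if_neg hx1, if_neg hy1a, if_neg hx2, if_pos hy2]
        exact Or.inl (dvd_mul_of_dvd_left
          (dvd_mul_of_dvd_right (pow_dvd_pow 5 (h1le x1)) (2 ^ K)) _)
    -- CA' : adjacent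
    · refine iff_of_true ⟨huv, ?_⟩ ?_
      · intro hc
        rw [Prod.mk_mul_mk, Prod.mk_eq_zero] at hc
        rw [hy1] at hc
        exact hAA y2 a hy20 hy2a ha (mul_comm a y2 ▸ hc.2)
      · rw [if_neg hx1, if_pos hy1, if_pos hx2, if_neg hy2a]
        exact Or.inr (dvd_mul_of_dvd_left
          (dvd_mul_of_dvd_left (pow_dvd_pow 2 (h2le y2)) (5 ^ N)) _)
    -- CS : not adjacent
    · refine iff_of_false ?_ ?_
      · rintro ⟨-, h0⟩
        exact h0 (by rw [Prod.mk_mul_mk, hx2, hy1, hy2, mul_zero, haa]; rfl)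
      · rw [if_neg hx1, if_pos hy1, if_pos hx2, if_pos hy2]
        rintro (h | h)
        · exact not5dvd K ((dvd_mul_of_dvd_left
            (dvd_mul_of_dvd_right (dvd_pow_self 5 hN0) (2 ^ K)) _).trans h)
        · exact not3dvd K N _ ((dvd_mul_left 3 (2 ^ K)).trans h)
    -- CB : adjacent
    · have hy2a : y2 ≠ a := hy2 ▸ Ne.symm ha
      refine iff_of_true ⟨huv, ?_⟩ ?_
      · intro hc
        rw [Prod.mk_mul_mk, Prod.mk_eq_zero] at hc
        exact mul_ne_zero hx1 hx2 hc.1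
      · rw [if_neg hx1, if_pos hy1, if_neg hx2, if_neg hy2a]
        exact Or.inr (dvd_mul_of_dvd_left
          (dvd_mul_of_dvd_right (pow_dvd_pow 5 (h1le x2)) (2 ^ K)) _)
    -- CC : adjacent
    · refine iff_of_true ⟨huv, ?_⟩ ?_
      · intro hc
        rw [Prod.mk_mul_mk, Prod.mk_eq_zero] at hc
        exact mul_ne_zero hx1 hx2 hc.1
      · rw [if_neg hx1, if_pos hy1, if_neg hx2, if_pos hy2]
        rcases le_total ((e₁ x1 : ℕ) + 1) ((e₁ x2 : ℕ) + 1) with h | h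
        · exact Or.inl (mul_dvd_mul_left _ (pow_dvd_pow 7 h))
        · exact Or.inr (mul_dvd_mul_left _ (pow_dvd_pow 7 h))
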